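/- Let φ be a holomorphic self-map of the unit disc belonging to the Dirichlet space. The composition operator C_φ is Hilbert–Schmidt on the Dirichlet space if and only if (1/π)∫_D |φ'(z)|²/(1-|φ(z)|²)² dA(z) < ∞, and this integral equals Σ_{n≥1} D(φⁿ)/n. -/

import Mathlib

open MeasureTheory Metric ENNReal

private lemma hasSum_succ_mul_geom {x : ℝ} (h0 : 0 ≤ x) (h1 : x < 1) :
    HasSum (fun n : ℕ => ((n : ℝ) + 1) * x ^ n) (1 / (1 - x) ^ 2) := by
  have hx : ‖x‖ < 1 := by rwa [Real.norm_eq_abs, abs_of_nonneg h0]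
  have A := (hasSum_coe_mul_geometric_of_norm_lt_one hx).add
    (hasSum_geometric_of_lt_one h0 h1)
  have hfun : (fun n : ℕ => ((n : ℝ) + 1) * x ^ n)
      = fun n : ℕ => (n : ℝ) * x ^ n + x ^ n := by funext n; ring
  have hne : (1 : ℝ) - x ≠ 0 := by linarith
  have hval : x / (1 - x) ^ 2 + (1 - x)⁻¹ = 1 / (1 - x) ^ 2 := by
    field_simp
    ring
  rw [hfun, ← hval]
  exact A

private lemma tsum_pointwise {r a : ℝ} (hr0 : 0 ≤ r) (hr : r < 1) (ha : 0 ≤ a) :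
    ∑' n : ℕ, ((n : ℝ≥0∞) + 1) * ENNReal.ofReal ((r ^ n) ^ 2 * a)
      = ENNReal.ofReal (a / (1 - r ^ 2) ^ 2) := by
  set x := r ^ 2 with hx
  have hx0 : 0 ≤ x := sq_nonneg r
  have hx1 : x < 1 := by
    have := pow_lt_one₀ hr0 hr (two_ne_zero)
    simpa [hx] using this
  have H : HasSum (fun n : ℕ => (((n : ℝ) + 1) * x ^ n) * a) (1 / (1 - x) ^ 2 * a) :=
    (hasSum_succ_mul_geom hx0 hx1).mul_right a
  have hsum : (∑' n : ℕ, (((n : ℝ) + 1) * x ^ n) * a) = a / (1 - x) ^ 2 := by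
    rw [H.tsum_eq]; ring
  have hnn : ∀ n : ℕ, 0 ≤ (((n : ℝ) + 1) * x ^ n) * a := by
    intro n
    positivity
  have := ENNReal.ofReal_tsum_of_nonneg hnn H.summable
  rw [hsum] at this
  rw [this]
  apply tsum_congr
  intro n
  have h1 : (r ^ n) ^ 2 = x ^ n := by rw [hx, ← pow_mul, ← pow_mul, mul_comm]
  rw [h1, show ((n : ℝ) + 1) * x ^ n * a = ((n + 1 : ℕ) : ℝ) * (x ^ n * a) by push_cast; ring,
    ENNReal.ofReal_mul (p := ((n + 1 : ℕ) : ℝ)) (by positivity),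
    ENNReal.ofReal_natCast, Nat.cast_add, Nat.cast_one]

private lemma tsum_shift_iff (A D : ℕ → ℝ≥0∞) (hD0 : D 0 = 0)
    (hA : ∑' n : ℕ, A n < ⊤) :
    (∑' n : ℕ, (A n + D n) / ((n : ℝ≥0∞) + 1) < ⊤)
      ↔ (∑' n : ℕ, D (n + 1) / ((n : ℝ≥0∞) + 1) < ⊤) := by
  have htop : ∀ n : ℕ, ((n : ℝ≥0∞) + 1) ≠ ⊤ :=
    fun n => ENNReal.add_ne_top.2 ⟨ENNReal.natCast_ne_top n, ENNReal.one_ne_top⟩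
  constructor
  · intro hT
    have h1 : ∑' n : ℕ, D n / ((n : ℝ≥0∞) + 1) < ⊤ := by
      refine lt_of_le_of_lt (Summable.tsum_le_tsum (fun n => ?_) ENNReal.summable ENNReal.summable) hT
      exact ENNReal.div_le_div le_add_self le_rfl
    rw [tsum_eq_zero_add' ENNReal.summable] at h1
    have h2 : ∑' n : ℕ, D (n + 1) / ((n : ℝ≥0∞) + 1 + 1) < ⊤ := by
      have h2' := (ENNReal.add_lt_top.mp h1).2
      convert h2' using 3 with n
      push_cast
      ring
    have h3 : ∀ n : ℕ, D (n + 1) / ((n : ℝ≥0∞) + 1)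
        ≤ 2 * (D (n + 1) / ((n : ℝ≥0∞) + 1 + 1)) := by
      intro n
      set x : ℝ≥0∞ := (n : ℝ≥0∞) + 1 with hxdef
      have hkey : x⁻¹ ≤ 2 * (x + 1)⁻¹ := by
        have hle : x + 1 ≤ 2 * x := by
          rw [two_mul]
          exact add_le_add le_rfl (by simp [hxdef])
        have hinv := ENNReal.inv_le_inv' hle
        calc x⁻¹ = 2 * (2 * x)⁻¹ := by
              rw [ENNReal.mul_inv (Or.inl two_ne_zero) (Or.inl ENNReal.ofNat_ne_top),
                ← mul_assoc, ENNReal.mul_inv_cancel two_ne_zero ENNReal.ofNat_ne_top, one_mul]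
          _ ≤ 2 * (x + 1)⁻¹ := mul_le_mul_right hinv 2
      calc D (n + 1) / x = D (n + 1) * x⁻¹ := by rw [div_eq_mul_inv]
        _ ≤ D (n + 1) * (2 * (x + 1)⁻¹) := mul_le_mul_right hkey _
        _ = 2 * (D (n + 1) * (x + 1)⁻¹) := by ring
        _ = 2 * (D (n + 1) / (x + 1)) := by rw [div_eq_mul_inv]
    calc ∑' n : ℕ, D (n + 1) / ((n : ℝ≥0∞) + 1)
        ≤ ∑' n : ℕ, 2 * (D (n + 1) / ((n : ℝ≥0∞) + 1 + 1)) :=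
          Summable.tsum_le_tsum h3 ENNReal.summable ENNReal.summable
      _ = 2 * ∑' n : ℕ, D (n + 1) / ((n : ℝ≥0∞) + 1 + 1) := ENNReal.tsum_mul_left
      _ < ⊤ := ENNReal.mul_lt_top (by simp) h2
  · intro hS
    have hDfin : ∑' n : ℕ, D n / ((n : ℝ≥0∞) + 1) < ⊤ := by
      rw [tsum_eq_zero_add' ENNReal.summable, hD0]
      simp only [Nat.cast_zero, zero_add, ENNReal.zero_div]
      refine lt_of_le_of_lt (Summable.tsum_le_tsum (fun n => ?_) ENNReal.summable ENNReal.summable) hS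
      refine ENNReal.div_le_div le_rfl ?_
      push_cast
      exact le_add_of_nonneg_right zero_le_one
    calc ∑' n : ℕ, (A n + D n) / ((n : ℝ≥0∞) + 1)
        = ∑' n : ℕ, (A n / ((n : ℝ≥0∞) + 1) + D n / ((n : ℝ≥0∞) + 1)) :=
          tsum_congr fun n => ENNReal.add_div
      _ = (∑' n : ℕ, A n / ((n : ℝ≥0∞) + 1)) + ∑' n : ℕ, D n / ((n : ℝ≥0∞) + 1) :=
          ENNReal.tsum_add
      _ ≤ (∑' n : ℕ, A n) + ∑' n : ℕ, D n / ((n : ℝ≥0∞) + 1) := by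
          refine add_le_add (Summable.tsum_le_tsum (fun n => ?_) ENNReal.summable ENNReal.summable) le_rfl
          calc A n / ((n : ℝ≥0∞) + 1) ≤ A n / 1 :=
                ENNReal.div_le_div le_rfl le_add_self
            _ = A n := by rw [div_one]
      _ < ⊤ := ENNReal.add_lt_top.mpr ⟨hA, hDfin⟩

/-- `C_φ` is Hilbert–Schmidt on the Dirichlet space (i.e. the sum of the squared
Dirichlet norms of `C_φ(zⁿ/√(n+1))` is finite) iff
`(1/π)∫_D |φ'|²/(1-|φ|²)² dA < ∞`, and this integral equals `∑_{n≥1} D(φⁿ)/n`. -/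
theorem hilbert_schmidt_dirichlet_iff (φ : ℂ → ℂ)
    (hφd : DifferentiableOn ℂ φ (ball (0:ℂ) 1))
    (hφm : Set.MapsTo φ (ball (0:ℂ) 1) (ball (0:ℂ) 1))
    (hφD : IntegrableOn (fun z => ‖deriv φ z‖ ^ 2) (ball (0:ℂ) 1)) :
    ((∑' n : ℕ, (ENNReal.ofReal (‖φ 0‖ ^ (2 * n)) +
          ENNReal.ofReal (1 / Real.pi) * ∫⁻ z in ball (0:ℂ) 1,
            ENNReal.ofReal (‖deriv (fun w => φ w ^ n) z‖ ^ 2)) / ((n : ℝ≥0∞) + 1)) < ⊤ ↔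
        ENNReal.ofReal (1 / Real.pi) * (∫⁻ z in ball (0:ℂ) 1,
          ENNReal.ofReal (‖deriv φ z‖ ^ 2 / (1 - ‖φ z‖ ^ 2) ^ 2)) < ⊤) ∧
      ENNReal.ofReal (1 / Real.pi) * (∫⁻ z in ball (0:ℂ) 1,
          ENNReal.ofReal (‖deriv φ z‖ ^ 2 / (1 - ‖φ z‖ ^ 2) ^ 2)) =
        ∑' n : ℕ, (ENNReal.ofReal (1 / Real.pi) * ∫⁻ z in ball (0:ℂ) 1,
          ENNReal.ofReal (‖deriv (fun w => φ w ^ (n + 1)) z‖ ^ 2)) / ((n : ℝ≥0∞) + 1) := by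
  set c : ℝ≥0∞ := ENNReal.ofReal (1 / Real.pi) with hc
  -- derivative formula
  have dpow : ∀ n : ℕ, ∀ z ∈ ball (0:ℂ) 1,
      deriv (fun w => φ w ^ (n + 1)) z = ((n + 1 : ℕ) : ℂ) * φ z ^ n * deriv φ z := by
    intro n z hz
    have hd : DifferentiableAt ℂ φ z := hφd.differentiableAt (isOpen_ball.mem_nhds hz)
    have := (hd.hasDerivAt.pow (n + 1)).deriv
    simpa [Pi.pow_def] using this
  -- J n
  set J : ℕ → ℝ≥0∞ := fun n => ∫⁻ z in ball (0:ℂ) 1,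
      ENNReal.ofReal ((‖φ z‖ ^ n) ^ 2 * ‖deriv φ z‖ ^ 2) with hJ
  have hIJ : ∀ n : ℕ, (∫⁻ z in ball (0:ℂ) 1,
      ENNReal.ofReal (‖deriv (fun w => φ w ^ (n + 1)) z‖ ^ 2))
      = ((n : ℝ≥0∞) + 1) ^ 2 * J n := by
    intro n
    rw [hJ, ← lintegral_const_mul' _ _ (by
      exact pow_ne_top (by exact add_ne_top.2 ⟨natCast_ne_top n, one_ne_top⟩))]
    apply setLIntegral_congr_fun measurableSet_ball
    intro z hz
    dsimp only
    rw [dpow n z hz]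
    have : ‖((n + 1 : ℕ) : ℂ) * φ z ^ n * deriv φ z‖ ^ 2
        = ((n + 1 : ℕ) : ℝ) ^ 2 * ((‖φ z‖ ^ n) ^ 2 * ‖deriv φ z‖ ^ 2) := by
      rw [norm_mul, norm_mul, norm_pow, RCLike.norm_natCast]
      ring
    rw [this, ENNReal.ofReal_mul (by positivity), ENNReal.ofReal_pow (by positivity),
      ENNReal.ofReal_natCast]
    push_cast
    ring
  -- the per-term identity for the RHS series
  have hne : ∀ n : ℕ, ((n : ℝ≥0∞) + 1) ≠ 0 := fun n => by simp
  have htop : ∀ n : ℕ, ((n : ℝ≥0∞) + 1) ≠ ⊤ :=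
    fun n => add_ne_top.2 ⟨natCast_ne_top n, one_ne_top⟩
  have hterm : ∀ n : ℕ,
      (c * ∫⁻ z in ball (0:ℂ) 1,
        ENNReal.ofReal (‖deriv (fun w => φ w ^ (n + 1)) z‖ ^ 2)) / ((n : ℝ≥0∞) + 1)
      = c * (((n : ℝ≥0∞) + 1) * J n) := by
    intro n
    rw [hIJ n, div_eq_mul_inv, pow_two]
    set x : ℝ≥0∞ := (n : ℝ≥0∞) + 1 with hxdef
    have hcancel : x * x⁻¹ = 1 := ENNReal.mul_inv_cancel (hne n) (htop n)
    calc c * (x * x * J n) * x⁻¹ = (x * x⁻¹) * (c * (x * J n)) := by ring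
      _ = c * (x * J n) := by rw [hcancel, one_mul]
  -- measurability
  have hφmeas : AEMeasurable φ (volume.restrict (ball (0:ℂ) 1)) :=
    (hφd.continuousOn.aemeasurable measurableSet_ball)
  have hdmeas : AEMeasurable (deriv φ) (volume.restrict (ball (0:ℂ) 1)) :=
    (measurable_deriv φ).aemeasurable
  have hmeas : ∀ n : ℕ, AEMeasurable
      (fun z => ((n : ℝ≥0∞) + 1) *
        ENNReal.ofReal ((‖φ z‖ ^ n) ^ 2 * ‖deriv φ z‖ ^ 2))
      (volume.restrict (ball (0:ℂ) 1)) := by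
    intro n
    exact (((((hφmeas.norm.pow_const n).pow_const 2).mul
      (hdmeas.norm.pow_const 2)).ennreal_ofReal).const_mul _)
  -- the main equality (part 2)
  have heq : c * (∫⁻ z in ball (0:ℂ) 1,
        ENNReal.ofReal (‖deriv φ z‖ ^ 2 / (1 - ‖φ z‖ ^ 2) ^ 2))
      = ∑' n : ℕ, (c * ∫⁻ z in ball (0:ℂ) 1,
        ENNReal.ofReal (‖deriv (fun w => φ w ^ (n + 1)) z‖ ^ 2)) / ((n : ℝ≥0∞) + 1) := by
    rw [tsum_congr hterm, ENNReal.tsum_mul_left]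
    congr 1
    have h1 : ∀ n : ℕ, ((n : ℝ≥0∞) + 1) * J n
        = ∫⁻ z in ball (0:ℂ) 1, ((n : ℝ≥0∞) + 1) *
            ENNReal.ofReal ((‖φ z‖ ^ n) ^ 2 * ‖deriv φ z‖ ^ 2) := by
      intro n
      rw [hJ, lintegral_const_mul' _ _ (htop n)]
    rw [tsum_congr h1, ← lintegral_tsum hmeas]
    symm
    apply setLIntegral_congr_fun measurableSet_ball
    intro z hz
    have hz1 : ‖φ z‖ < 1 := mem_ball_zero_iff.mp (hφm hz)
    exact tsum_pointwise (norm_nonneg _) hz1 (by positivity)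
  refine ⟨?_, heq⟩
  rw [heq]
  have hφ0 : ‖φ 0‖ < 1 := mem_ball_zero_iff.mp (hφm (mem_ball_self one_pos))
  have hAfin : ∑' n : ℕ, ENNReal.ofReal (‖φ 0‖ ^ (2 * n)) < ⊤ := by
    have hq : ∀ n : ℕ, ENNReal.ofReal (‖φ 0‖ ^ (2 * n))
        = ENNReal.ofReal (‖φ 0‖ ^ 2) ^ n := by
      intro n
      rw [pow_mul, ENNReal.ofReal_pow (by positivity)]
    rw [tsum_congr hq, ENNReal.tsum_geometric, ENNReal.inv_lt_top]
    have hq1 : ENNReal.ofReal (‖φ 0‖ ^ 2) < 1 := by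
      rw [ENNReal.ofReal_lt_one]
      exact pow_lt_one₀ (norm_nonneg _) hφ0 two_ne_zero
    exact tsub_pos_iff_lt.mpr hq1
  have hD0 : (c * ∫⁻ z in ball (0:ℂ) 1,
      ENNReal.ofReal (‖deriv (fun w => φ w ^ 0) z‖ ^ 2)) = 0 := by
    have h0 : (fun w => φ w ^ 0) = fun _ : ℂ => (1 : ℂ) := by funext w; simp
    simp [h0]
  exact tsum_shift_iff _ _ hD0 hAfin
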